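/- For a discrete-time LPV-SSA Σ, the span of states reachable from the zero initial state equals the column space of the extended reachability matrix ℛ_{n_x-1} when ℙ ⊆ ℝ^{n_p} has nonempty interior; in particular, Σ is span-reachable from 0 if and only if rank ℛ_{n_x-1} = n_x. -/
import Mathlib


open Matrix

/-- Affine matrix-valued function of the scheduling value: `M(q) = M₀ + Σᵢ qᵢ Mᵢ`. -/
noncomputable def affMat {np : ℕ} {m n : Type*}
    (M : Fin (np + 1) → Matrix m n ℝ) (q : Fin np → ℝ) : Matrix m n ℝ :=
  M 0 + ∑ i : Fin np, q i • M i.succ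

/-- State trajectory of a discrete-time LPV-SSA: `x(t+1) = A(p(t)) x(t) + B(p(t)) u(t)`. -/
noncomputable def st {np : ℕ} {X U : Type*} [Fintype X] [Fintype U]
    (A : Fin (np + 1) → Matrix X X ℝ) (B : Fin (np + 1) → Matrix X U ℝ)
    (x0 : X → ℝ) (u : ℕ → U → ℝ) (p : ℕ → Fin np → ℝ) : ℕ → X → ℝ
  | 0 => x0
  | t + 1 => affMat A (p t) *ᵥ st A B x0 u p t + affMat B (p t) *ᵥ u t

/-- Output trajectory (input-output map from initial state `x0`):
`y(t) = C(p(t)) x(t) + D(p(t)) u(t)`. -/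
noncomputable def out {np : ℕ} {X U Y : Type*} [Fintype X] [Fintype U]
    (A : Fin (np + 1) → Matrix X X ℝ) (B : Fin (np + 1) → Matrix X U ℝ)
    (C : Fin (np + 1) → Matrix Y X ℝ) (D : Fin (np + 1) → Matrix Y U ℝ)
    (x0 : X → ℝ) (u : ℕ → U → ℝ) (p : ℕ → Fin np → ℝ) (t : ℕ) : Y → ℝ :=
  affMat C (p t) *ᵥ st A B x0 u p t + affMat D (p t) *ᵥ u t

/-- Kernel of the `k`-step extended observability matrix `𝒪_k`. -/
noncomputable def kerO {np nx ny : ℕ}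
    (A : Fin (np + 1) → Matrix (Fin nx) (Fin nx) ℝ)
    (C : Fin (np + 1) → Matrix (Fin ny) (Fin nx) ℝ) : ℕ → Submodule ℝ (Fin nx → ℝ)
  | 0 => ⨅ i : Fin (np + 1), LinearMap.ker (Matrix.mulVecLin (C i))
  | k + 1 => kerO A C k ⊓
      ⨅ i : Fin (np + 1), Submodule.comap (Matrix.mulVecLin (A i)) (kerO A C k)

/-- Column space (range) of the `k`-step extended reachability matrix `ℛ_k`. -/
noncomputable def reachR {np nx nu : ℕ}
    (A : Fin (np + 1) → Matrix (Fin nx) (Fin nx) ℝ)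
    (B : Fin (np + 1) → Matrix (Fin nx) (Fin nu) ℝ) : ℕ → Submodule ℝ (Fin nx → ℝ)
  | 0 => ⨆ i : Fin (np + 1), LinearMap.range (Matrix.mulVecLin (B i))
  | k + 1 => reachR A B k ⊔
      ⨆ i : Fin (np + 1), Submodule.map (Matrix.mulVecLin (A i)) (reachR A B k)

section Aux
variable {np nx nu : ℕ}
variable (A : Fin (np + 1) → Matrix (Fin nx) (Fin nx) ℝ)
variable (B : Fin (np + 1) → Matrix (Fin nx) (Fin nu) ℝ)

lemma affMat_mulVec {m n : ℕ} (M : Fin (np + 1) → Matrix (Fin m) (Fin n) ℝ)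
    (q : Fin np → ℝ) (v : Fin n → ℝ) :
    affMat M q *ᵥ v = M 0 *ᵥ v + ∑ i : Fin np, q i • (M i.succ *ᵥ v) := by
  unfold affMat
  rw [Matrix.add_mulVec]
  congr 1
  have : ((∑ i : Fin np, q i • M i.succ) *ᵥ v) = ∑ i : Fin np, (q i • M i.succ) *ᵥ v := by
    ext j
    simp only [Matrix.mulVec, dotProduct, Finset.sum_apply, Matrix.sum_apply,
      Matrix.smul_apply, smul_eq_mul, Finset.sum_mul]
    rw [Finset.sum_comm]
  rw [this]
  exact Finset.sum_congr rfl fun i _ => Matrix.smul_mulVec _ _ _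

lemma st_congr {X U : Type*} [Fintype X] [Fintype U]
    (A : Fin (np + 1) → Matrix X X ℝ) (B : Fin (np + 1) → Matrix X U ℝ)
    (x0 : X → ℝ) (u u' : ℕ → U → ℝ) (p p' : ℕ → Fin np → ℝ)
    (t : ℕ) (hu : ∀ s < t, u s = u' s) (hp : ∀ s < t, p s = p' s) :
    st A B x0 u p t = st A B x0 u' p' t := by
  induction t with
  | zero => rfl
  | succ t ih =>
    rw [st, st, ih (fun s hs => hu s (hs.trans (Nat.lt_succ_self t)))
      (fun s hs => hp s (hs.trans (Nat.lt_succ_self t))),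
      hu t (Nat.lt_succ_self t), hp t (Nat.lt_succ_self t)]

lemma reachR_le_succ (k : ℕ) : reachR A B k ≤ reachR A B (k+1) := by
  rw [reachR]; exact le_sup_left

lemma reachR_mono : Monotone (reachR A B) :=
  monotone_nat_of_le_succ (reachR_le_succ A B)

lemma reachR_stab {m : ℕ} (h : reachR A B (m+1) = reachR A B m) :
    ∀ j, reachR A B (m + j) = reachR A B m := by
  intro j
  induction j with
  | zero => rfl
  | succ j ih =>
    have : m + (j+1) = (m+j) + 1 := rfl
    rw [this, reachR, ih, ← reachR, h]


lemma mem_reachR_zero (j : Fin (np+1)) (w : Fin nu → ℝ) :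
    B j *ᵥ w ∈ reachR A B 0 := by
  rw [reachR]
  exact Submodule.mem_iSup_of_mem j ⟨w, rfl⟩

lemma affA_mem (k : ℕ) (q : Fin np → ℝ) {v : Fin nx → ℝ} (hv : v ∈ reachR A B k) :
    affMat A q *ᵥ v ∈ reachR A B (k+1) := by
  have hmem : ∀ j : Fin (np+1), A j *ᵥ v ∈ reachR A B (k+1) := by
    intro j
    have : A j *ᵥ v ∈ Submodule.map (Matrix.mulVecLin (A j)) (reachR A B k) :=
      ⟨v, hv, rfl⟩
    rw [reachR]
    exact Submodule.mem_sup_right (Submodule.mem_iSup_of_mem j this)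
  rw [affMat_mulVec]
  exact Submodule.add_mem _ (hmem 0)
    (Submodule.sum_mem _ fun i _ => Submodule.smul_mem _ _ (hmem i.succ))

lemma st_mem_reachR (u : ℕ → Fin nu → ℝ) (p : ℕ → Fin np → ℝ) (t : ℕ) :
    st A B (0 : Fin nx → ℝ) u p t ∈ reachR A B t := by
  induction t with
  | zero => exact Submodule.zero_mem _
  | succ t ih =>
    rw [st]
    refine Submodule.add_mem _ (affA_mem A B t (p t) ih) ?_
    rw [affMat_mulVec]
    have h0 : ∀ j : Fin (np+1), B j *ᵥ u t ∈ reachR A B (t+1) := fun j =>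
      reachR_mono A B (Nat.zero_le _) (mem_reachR_zero A B j (u t))
    exact Submodule.add_mem _ (h0 0)
      (Submodule.sum_mem _ fun i _ => Submodule.smul_mem _ _ (h0 i.succ))

lemma reachR_bot_step (h : reachR A B 0 = ⊥) : reachR A B 1 = ⊥ := by
  rw [reachR, h]
  simp

lemma exists_stab (hnx : 1 ≤ nx) : ∃ m ≤ nx - 1, reachR A B (m+1) = reachR A B m := by
  by_contra h
  push_neg at h
  have hstrict : ∀ m ≤ nx - 1, reachR A B m < reachR A B (m+1) := fun m hm =>
    lt_of_le_of_ne (reachR_le_succ A B m) (fun he => h m hm he.symm)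
  have hne : reachR A B 0 ≠ ⊥ := by
    intro hbot
    exact (hstrict 0 (Nat.zero_le _)).ne (hbot.trans (reachR_bot_step A B hbot).symm)
  have hrank : ∀ m ≤ nx - 1, m + 1 ≤ Module.finrank ℝ (reachR A B m) := by
    intro m
    induction m with
    | zero =>
      intro _
      rw [Nat.one_le_iff_ne_zero]
      intro h0
      exact hne (Submodule.finrank_eq_zero.mp h0)
    | succ m ih =>
      intro hm
      have h1 : m ≤ nx - 1 := Nat.le_of_succ_le hm
      have h2 := ih h1
      have h3 : Module.finrank ℝ (reachR A B m) < Module.finrank ℝ (reachR A B (m+1)) :=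
        Submodule.finrank_lt_finrank_of_lt (hstrict m h1)
      omega
  have htop : reachR A B (nx - 1) = ⊤ := by
    apply Submodule.eq_top_of_finrank_eq
    have h1 := hrank (nx - 1) le_rfl
    have h2 : Module.finrank ℝ (reachR A B (nx - 1)) ≤ Module.finrank ℝ (Fin nx → ℝ) :=
      Submodule.finrank_le _
    have h3 : Module.finrank ℝ (Fin nx → ℝ) = nx := by
      simp [Module.finrank_pi]
    omega
  have := hstrict (nx - 1) le_rfl
  rw [htop] at this
  exact not_top_lt this
lemma reachR_le_fix (hnx : 1 ≤ nx) (k : ℕ) : reachR A B k ≤ reachR A B (nx - 1) := by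
  obtain ⟨m, hm, hstab⟩ := exists_stab A B hnx
  by_cases hk : k ≤ nx - 1
  · exact reachR_mono A B hk
  · push_neg at hk
    have h1 : reachR A B k = reachR A B m := by
      have : k = m + (k - m) := by omega
      rw [this]; exact reachR_stab A B hstab _
    have h2 : reachR A B (nx - 1) = reachR A B m := by
      have : nx - 1 = m + (nx - 1 - m) := by omega
      rw [this]; exact reachR_stab A B hstab _
    rw [h1, h2]

noncomputable def reachSet (P : Set (Fin np → ℝ)) : Set (Fin nx → ℝ) :=
  {x | ∃ (u : ℕ → Fin nu → ℝ) (p : ℕ → Fin np → ℝ),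
    (∀ t, p t ∈ P) ∧ ∃ t : ℕ, x = st A B (0 : Fin nx → ℝ) u p t}

lemma zero_mem_reachSet {P : Set (Fin np → ℝ)} (hP : P.Nonempty) :
    0 ∈ reachSet A B P := by
  obtain ⟨q, hq⟩ := hP
  exact ⟨0, fun _ => q, fun _ => hq, 0, rfl⟩

lemma step_mem_reachSet {P : Set (Fin np → ℝ)} {x : Fin nx → ℝ}
    (hx : x ∈ reachSet A B P) {q : Fin np → ℝ} (hq : q ∈ P) (w : Fin nu → ℝ) :
    affMat A q *ᵥ x + affMat B q *ᵥ w ∈ reachSet A B P := by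
  obtain ⟨u, p, hp, t, rfl⟩ := hx
  refine ⟨fun s => if s = t then w else u s, fun s => if s < t then p s else q,
    fun s => by dsimp only; split
                · exact hp s
                · exact hq, t+1, ?_⟩
  rw [st]
  have h1 : st A B (0 : Fin nx → ℝ) (fun s => if s = t then w else u s)
      (fun s => if s < t then p s else q) t = st A B 0 u p t :=
    (st_congr A B 0 u _ p _ t (fun s hs => by simp [Nat.ne_of_lt hs])
      (fun s hs => by simp [hs])).symm
  rw [h1]
  simp

lemma affB_mem_reachSet {P : Set (Fin np → ℝ)} (hP : P.Nonempty) {q : Fin np → ℝ}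
    (hq : q ∈ P) (w : Fin nu → ℝ) : affMat B q *ᵥ w ∈ reachSet A B P := by
  have := step_mem_reachSet A B (zero_mem_reachSet A B hP) hq w
  simpa [Matrix.mulVec_zero] using this

lemma affA_mem_reachSet {P : Set (Fin np → ℝ)} {x : Fin nx → ℝ}
    (hx : x ∈ reachSet A B P) {q : Fin np → ℝ} (hq : q ∈ P) :
    affMat A q *ᵥ x ∈ reachSet A B P := by
  have := step_mem_reachSet A B hx hq 0
  simpa [Matrix.mulVec_zero] using this

lemma perturb {P : Set (Fin np → ℝ)} {q0 : Fin np → ℝ} (hq0 : q0 ∈ interior P)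
    (i : Fin np) : ∃ ε : ℝ, 0 < ε ∧ q0 + ε • (Pi.single i 1 : Fin np → ℝ) ∈ P := by
  rw [mem_interior_iff_mem_nhds, Metric.mem_nhds_iff] at hq0
  obtain ⟨ε, hε, hball⟩ := hq0
  refine ⟨ε/2, by positivity, hball ?_⟩
  rw [Metric.mem_ball, dist_eq_norm, add_sub_cancel_left, norm_smul, Pi.norm_single]
  simp only [norm_one, mul_one, Real.norm_eq_abs]
  rw [abs_of_pos (by positivity)]
  linarith

lemma single_mem_span {P : Set (Fin np → ℝ)} {q0 : Fin np → ℝ} (hq0 : q0 ∈ interior P)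
    {m n : ℕ} (M : Fin (np+1) → Matrix (Fin m) (Fin n) ℝ) (v : Fin n → ℝ)
    (S : Submodule ℝ (Fin m → ℝ))
    (hS : ∀ q ∈ P, affMat M q *ᵥ v ∈ S) (j : Fin (np+1)) : M j *ᵥ v ∈ S := by
  have hq0P : q0 ∈ P := interior_subset hq0
  have hstep : ∀ i : Fin np, M i.succ *ᵥ v ∈ S := by
    intro i
    obtain ⟨ε, hε, hPe⟩ := perturb hq0 i
    have key : affMat M (q0 + ε • (Pi.single i 1 : Fin np → ℝ)) *ᵥ v - affMat M q0 *ᵥ v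
        = ε • (M i.succ *ᵥ v) := by
      rw [affMat_mulVec, affMat_mulVec]
      have hsum : ∑ i' : Fin np, (q0 + ε • (Pi.single i 1 : Fin np → ℝ)) i' • (M i'.succ *ᵥ v)
          = (∑ i' : Fin np, q0 i' • (M i'.succ *ᵥ v)) + ε • (M i.succ *ᵥ v) := by
        have : ∀ i' : Fin np, (q0 + ε • (Pi.single i 1 : Fin np → ℝ)) i' • (M i'.succ *ᵥ v)
            = q0 i' • (M i'.succ *ᵥ v)
              + (if i' = i then ε • (M i'.succ *ᵥ v) else 0) := by
          intro i'
          rw [Pi.add_apply, add_smul]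
          congr 1
          by_cases h : i' = i
          · simp [h]
          · simp [h, Pi.single_apply]
        rw [Finset.sum_congr rfl (fun i' _ => this i'), Finset.sum_add_distrib,
          Finset.sum_ite_eq' Finset.univ i (fun i' => ε • (M i'.succ *ᵥ v))]
        simp
      rw [hsum]
      abel
    have hmem : ε • (M i.succ *ᵥ v) ∈ S := by
      rw [← key]
      exact Submodule.sub_mem _ (hS _ hPe) (hS _ hq0P)
    have := Submodule.smul_mem S ε⁻¹ hmem
    rwa [inv_smul_smul₀ hε.ne'] at this
  rcases Fin.eq_zero_or_eq_succ j with hj | ⟨i, hj⟩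
  · subst hj
    have : M 0 *ᵥ v = affMat M q0 *ᵥ v - ∑ i : Fin np, q0 i • (M i.succ *ᵥ v) := by
      rw [affMat_mulVec]; abel
    rw [this]
    exact Submodule.sub_mem _ (hS _ hq0P)
      (Submodule.sum_mem _ fun i _ => Submodule.smul_mem _ _ (hstep i))
  · subst hj
    exact hstep i

lemma reachR_le_span {P : Set (Fin np → ℝ)} {q0 : Fin np → ℝ} (hq0 : q0 ∈ interior P)
    (k : ℕ) : reachR A B k ≤ Submodule.span ℝ (reachSet A B P) := by
  set S := Submodule.span ℝ (reachSet A B P) with hSdef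
  have hPne : P.Nonempty := ⟨q0, interior_subset hq0⟩
  have hB : ∀ (j : Fin (np+1)) (w : Fin nu → ℝ), B j *ᵥ w ∈ S := fun j w =>
    single_mem_span hq0 B w S
      (fun q hq => Submodule.subset_span (affB_mem_reachSet A B hPne hq w)) j
  have hA : ∀ j : Fin (np+1), Submodule.map (Matrix.mulVecLin (A j)) S ≤ S := by
    intro j
    rw [hSdef, Submodule.map_span_le]
    intro x hx
    exact single_mem_span hq0 A x S
      (fun q hq => Submodule.subset_span (affA_mem_reachSet A B hx hq)) j
  induction k with
  | zero =>
    rw [reachR]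
    exact iSup_le fun i => by rintro x ⟨w, rfl⟩; exact hB i w
  | succ k ih =>
    rw [reachR]
    exact sup_le ih (iSup_le fun i => le_trans (Submodule.map_mono ih) (hA i))
end Aux

/-- if the scheduling set has nonempty interior, the span of the states of
a discrete-time LPV-SSA reachable from the zero initial state equals the column space of
the extended reachability matrix `ℛ_{n_x-1}`; in particular the system is span-reachable
from `0` iff `rank ℛ_{n_x-1} = n_x`. -/
theorem stmt12 {np nx nu : ℕ} (hnx : 1 ≤ nx) (P : Set (Fin np → ℝ))
    (hP : (interior P).Nonempty)
    (A : Fin (np + 1) → Matrix (Fin nx) (Fin nx) ℝ)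
    (B : Fin (np + 1) → Matrix (Fin nx) (Fin nu) ℝ) :
    Submodule.span ℝ {x : Fin nx → ℝ |
        ∃ (u : ℕ → Fin nu → ℝ) (p : ℕ → Fin np → ℝ),
          (∀ t, p t ∈ P) ∧ ∃ t : ℕ, x = st A B (0 : Fin nx → ℝ) u p t} =
      reachR A B (nx - 1) ∧
    (Submodule.span ℝ {x : Fin nx → ℝ |
        ∃ (u : ℕ → Fin nu → ℝ) (p : ℕ → Fin np → ℝ),
          (∀ t, p t ∈ P) ∧ ∃ t : ℕ, x = st A B (0 : Fin nx → ℝ) u p t} = ⊤ ↔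
      reachR A B (nx - 1) = ⊤) := by
  obtain ⟨q0, hq0⟩ := hP
  have hmain : Submodule.span ℝ (reachSet A B P) = reachR A B (nx - 1) :=
    le_antisymm
      (Submodule.span_le.mpr (by
        rintro x ⟨u, p, hp, t, rfl⟩
        exact reachR_le_fix A B hnx t (st_mem_reachR A B u p t)))
      (reachR_le_span A B hq0 (nx - 1))
  exact ⟨hmain, by rw [← hmain]; exact Iff.rfl⟩
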